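/- For each integer $k \ge 1$ and each integer $\beta \ge 3$, there exists a non-planar finite simple connected graph $G$ with $\dim_k(G) = \beta$. -/

import Mathlib

open SimpleGraph

/-- The distance-`k` truncated distance `dₖ(x,y) = min{d(x,y), k+1}`, valued in `ℕ∞`
(so unreachable pairs have distance `⊤`, which is truncated to `k+1`). -/
noncomputable def distK {V : Type*} (G : SimpleGraph V) (k : ℕ) (x y : V) : ℕ∞ :=
  min (G.edist x y) (k + 1)

/-- `S` is a distance-`k` resolving set of `G`. -/
def IsDistKResolving {V : Type*} (G : SimpleGraph V) (k : ℕ) (S : Set V) : Prop :=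
  ∀ x y : V, x ≠ y → ∃ z ∈ S, distK G k x z ≠ distK G k y z

/-- The distance-`k` dimension of a finite graph `G`: the minimum cardinality of a
distance-`k` resolving set of `G`. -/
noncomputable def dimK {V : Type*} [Fintype V] (G : SimpleGraph V) (k : ℕ) : ℕ :=
  sInf { m | ∃ S : Finset V, IsDistKResolving G k ↑S ∧ S.card = m }

/-- `H` is a minor of `G`: there is an assignment of disjoint, nonempty, connected
branch sets in `G` to the vertices of `H` such that edges of `H` are realized by
edges of `G` between the corresponding branch sets. -/
def IsMinor {V W : Type*} (G : SimpleGraph V) (H : SimpleGraph W) : Prop :=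
  ∃ f : W → Set V,
    (∀ w, (f w).Nonempty) ∧
    (∀ w, (G.induce (f w)).Connected) ∧
    (∀ w w', w ≠ w' → Disjoint (f w) (f w')) ∧
    (∀ w w', H.Adj w w' → ∃ a ∈ f w, ∃ b ∈ f w', G.Adj a b)

/-- By Wagner's theorem, a graph is non-planar iff it has `K₅` or `K₃,₃` as a minor. -/
def NonPlanar {V : Type*} (G : SimpleGraph V) : Prop :=
  IsMinor G (⊤ : SimpleGraph (Fin 5)) ∨ IsMinor G (completeBipartiteGraph (Fin 3) (Fin 3))

/-! ### Auxiliary: singleton branch sets give minors from cliques -/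

lemma minor_top5_of_clique {V : Type*} (G : SimpleGraph V) (g : Fin 5 → V)
    (hg : Function.Injective g) (hadj : ∀ i j : Fin 5, i ≠ j → G.Adj (g i) (g j)) :
    IsMinor G (⊤ : SimpleGraph (Fin 5)) := by
  refine ⟨fun w => {g w}, fun w => ⟨g w, rfl⟩, fun w => ?_, fun w w' hne => ?_, fun w w' h => ?_⟩
  · have hne : Nonempty (({g w} : Set V)) := ⟨⟨g w, rfl⟩⟩
    constructor
    intro a b
    have hab : a = b := Subtype.ext (by rw [a.2, b.2])
    rw [hab]
  · rw [Set.disjoint_singleton_left]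
    exact fun hmem => hne (hg hmem)
  · exact ⟨g w, rfl, g w', rfl, hadj w w' ((top_adj w w').mp h)⟩

/-! ### The case `β = 3`: a 10-vertex graph with a `K₇` clique -/

def sEdges : List (Fin 10 × Fin 10) :=
  [(0,3),(1,3),(2,3),(0,4),(1,4),(0,5),(2,5),(1,6),(2,6),(0,7),(1,8),(2,9)]

def adjB (x y : Fin 10) : Bool :=
  x ≠ y && ((3 ≤ x.val && 3 ≤ y.val) || sEdges.contains (x,y) || sEdges.contains (y,x))

def G3 : SimpleGraph (Fin 10) where
  Adj x y := adjB x y = true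
  symm := ⟨by intro x y; revert x y; decide⟩
  loopless := ⟨by intro x; revert x; decide⟩

instance : DecidableRel G3.Adj := fun _ _ => inferInstanceAs (Decidable (_ = true))

lemma adj3 : ∀ x : Fin 10, x ≠ 3 → G3.Adj x 3 := by decide

def D3 (x y : Fin 10) : ℕ := if x = y then 0 else if adjB x y then 1 else 2

lemma D3_lt_three (x y : Fin 10) : D3 x y < 3 := by
  unfold D3; split_ifs <;> omega

lemma G3_edist (x y : Fin 10) : G3.edist x y = (D3 x y : ℕ∞) := by
  unfold D3
  split_ifs with h1 h2
  · subst h1; simp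
  · exact_mod_cast (edist_eq_one_iff_adj).mpr h2
  · have hx3 : x ≠ 3 := by rintro rfl; exact h2 (G3.adj_symm (adj3 y (Ne.symm h1)))
    have hy3 : y ≠ 3 := by rintro rfl; exact h2 (adj3 x h1)
    have ha : G3.Adj x 3 := adj3 x hx3
    have hb : G3.Adj 3 y := G3.adj_symm (adj3 y hy3)
    have hle : G3.edist x y ≤ 2 := by
      have := edist_le ((ha.toWalk.append hb.toWalk))
      simpa using this
    have hne0 : G3.edist x y ≠ 0 := by simp [h1]
    have hne1 : G3.edist x y ≠ 1 := fun h => h2 (edist_eq_one_iff_adj.mp h)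
    have hnetop : G3.edist x y ≠ ⊤ := by intro ht; rw [ht] at hle; simp at hle
    lift G3.edist x y to ℕ using hnetop with e he
    have h2' : e ≤ 2 := by exact_mod_cast hle
    have h0' : e ≠ 0 := by exact_mod_cast hne0
    have h1' : e ≠ 1 := by exact_mod_cast hne1
    norm_cast
    omega

lemma distK_G3 {k : ℕ} (hk : 1 ≤ k) (x y : Fin 10) :
    distK G3 k x y = (D3 x y : ℕ∞) := by
  unfold distK
  rw [G3_edist]
  apply min_eq_left
  have h2 : D3 x y ≤ 2 := by unfold D3; split_ifs <;> omega
  calc (D3 x y : ℕ∞) ≤ (2 : ℕ∞) := by exact_mod_cast h2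
    _ ≤ (k : ℕ∞) + 1 := by exact_mod_cast (show 2 ≤ k + 1 by omega)

lemma G3_resolve_aux : ∀ x y : Fin 10, x ≠ y →
    ∃ z ∈ ({0,1,2} : Finset (Fin 10)), D3 x z ≠ D3 y z := by decide

lemma G3_resolving {k : ℕ} (hk : 1 ≤ k) :
    IsDistKResolving G3 k (({0,1,2} : Finset (Fin 10)) : Set (Fin 10)) := by
  intro x y hxy
  obtain ⟨z, hz, hd⟩ := G3_resolve_aux x y hxy
  refine ⟨z, by exact_mod_cast hz, ?_⟩
  rw [distK_G3 hk, distK_G3 hk]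
  exact_mod_cast hd

lemma G3_lower {k : ℕ} (hk : 1 ≤ k) (S : Finset (Fin 10))
    (h : IsDistKResolving G3 k ↑S) : 3 ≤ S.card := by
  by_contra hc
  push_neg at hc
  have hc2 : S.card ≤ 2 := by omega
  set F : Fin 10 → (↥S → Fin 3) := fun x z => ⟨D3 x z.1, D3_lt_three x z.1⟩ with hF
  have hinj : Function.Injective F := by
    intro x y hxy
    by_contra hne
    obtain ⟨z, hzS, hzd⟩ := h x y hne
    have hzS' : z ∈ S := hzS
    apply hzd
    rw [distK_G3 hk, distK_G3 hk]
    have := congrFun hxy ⟨z, hzS'⟩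
    have : D3 x z = D3 y z := congrArg Fin.val this
    rw [this]
  have hcard := Fintype.card_le_of_injective F hinj
  rw [Fintype.card_fun] at hcard
  simp only [Fintype.card_fin, Fintype.card_coe] at hcard
  have hpow : (3 : ℕ) ^ S.card ≤ 3 ^ 2 := Nat.pow_le_pow_right (by omega) hc2
  omega

lemma G3_connected : G3.Connected := by
  have r3 : ∀ u : Fin 10, G3.Reachable u 3 := by
    intro u
    by_cases h : u = 3
    · exact h ▸ Reachable.refl _
    · exact (adj3 u h).reachable
  constructor
  intro u v
  exact (r3 u).trans (r3 v).symm

lemma G3_clique : ∀ i j : Fin 5, i ≠ j →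
    G3.Adj ⟨i.val + 3, by omega⟩ ⟨j.val + 3, by omega⟩ := by decide

lemma G3_nonplanar : NonPlanar G3 := by
  left
  apply minor_top5_of_clique G3 (fun i => ⟨i.val + 3, by omega⟩)
  · intro a b hab
    have : a.val + 3 = b.val + 3 := congrArg Fin.val hab
    exact Fin.ext (by omega)
  · exact G3_clique

lemma G3_dimK {k : ℕ} (hk : 1 ≤ k) : dimK G3 k = 3 := by
  have hmem : (3 : ℕ) ∈ { m | ∃ S : Finset (Fin 10),
      IsDistKResolving G3 k ↑S ∧ S.card = m } :=
    ⟨{0,1,2}, G3_resolving hk, by decide⟩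
  apply le_antisymm
  · exact Nat.sInf_le hmem
  · apply le_csInf ⟨3, hmem⟩
    rintro m ⟨S, hS, rfl⟩
    exact G3_lower hk S hS

/-! ### The case `β ≥ 4`: the complete graph `K_{β+1}` -/

def DK {n : ℕ} (x y : Fin n) : ℕ := if x = y then 0 else 1

lemma top_edist {n : ℕ} (x y : Fin n) :
    (⊤ : SimpleGraph (Fin n)).edist x y = (DK x y : ℕ∞) := by
  unfold DK
  split_ifs with h1
  · subst h1; simp
  · exact_mod_cast (edist_eq_one_iff_adj).mpr ((top_adj x y).mpr h1)

lemma distK_top {n k : ℕ} (hk : 1 ≤ k) (x y : Fin n) :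
    distK (⊤ : SimpleGraph (Fin n)) k x y = (DK x y : ℕ∞) := by
  unfold distK
  rw [top_edist]
  apply min_eq_left
  have h2 : DK x y ≤ 1 := by unfold DK; split_ifs <;> omega
  calc (DK x y : ℕ∞) ≤ (1 : ℕ∞) := by exact_mod_cast h2
    _ ≤ (k : ℕ∞) + 1 := by exact_mod_cast (show 1 ≤ k + 1 by omega)

lemma top_resolving {n k : ℕ} (hn : 1 ≤ n) (hk : 1 ≤ k) :
    IsDistKResolving (⊤ : SimpleGraph (Fin n)) k
      ((Finset.univ.erase (⟨0, hn⟩ : Fin n)) : Set (Fin n)) := by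
  intro x y hxy
  by_cases hx : x ∈ Finset.univ.erase (⟨0, hn⟩ : Fin n)
  · refine ⟨x, by exact_mod_cast hx, ?_⟩
    rw [distK_top hk, distK_top hk]
    unfold DK
    simp [hxy, Ne.symm hxy]
  · have hx0 : x = ⟨0, hn⟩ := by simpa [Finset.mem_erase] using hx
    have hy : y ∈ Finset.univ.erase (⟨0, hn⟩ : Fin n) := by
      simp [Finset.mem_erase]
      rw [← hx0]
      exact (Ne.symm hxy)
    refine ⟨y, by exact_mod_cast hy, ?_⟩
    rw [distK_top hk, distK_top hk]
    unfold DK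
    simp [hxy]

lemma top_lower {n k : ℕ} (hk : 1 ≤ k) (S : Finset (Fin n))
    (h : IsDistKResolving (⊤ : SimpleGraph (Fin n)) k ↑S) : n - 1 ≤ S.card := by
  by_contra hc
  push_neg at hc
  have hcompl : 2 ≤ Sᶜ.card := by
    rw [Finset.card_compl]
    simp only [Fintype.card_fin]
    omega
  obtain ⟨x, hx, y, hy, hxy⟩ := Finset.one_lt_card.mp hcompl
  obtain ⟨z, hzS, hzd⟩ := h x y hxy
  have hzS' : z ∈ S := hzS
  apply hzd
  rw [distK_top hk, distK_top hk]
  have hxz : x ≠ z := fun he => (Finset.mem_compl.mp hx) (he ▸ hzS')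
  have hyz : y ≠ z := fun he => (Finset.mem_compl.mp hy) (he ▸ hzS')
  unfold DK
  simp [hxz, hyz]

lemma top_connected {n : ℕ} (hn : 1 ≤ n) : (⊤ : SimpleGraph (Fin n)).Connected := by
  have : Nonempty (Fin n) := ⟨⟨0, hn⟩⟩
  constructor
  intro u v
  by_cases h : u = v
  · exact h ▸ Reachable.refl _
  · exact ((top_adj u v).mpr h).reachable

lemma top_dimK {n k : ℕ} (hn : 1 ≤ n) (hk : 1 ≤ k) :
    dimK (⊤ : SimpleGraph (Fin n)) k = n - 1 := by
  have hmem : (n - 1 : ℕ) ∈ { m | ∃ S : Finset (Fin n),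
      IsDistKResolving (⊤ : SimpleGraph (Fin n)) k ↑S ∧ S.card = m } := by
    refine ⟨Finset.univ.erase (⟨0, hn⟩ : Fin n), top_resolving hn hk, ?_⟩
    rw [Finset.card_erase_of_mem (Finset.mem_univ _)]
    simp
  apply le_antisymm
  · exact Nat.sInf_le hmem
  · apply le_csInf ⟨n - 1, hmem⟩
    rintro m ⟨S, hS, rfl⟩
    exact top_lower hk S hS

lemma top_nonplanar {n : ℕ} (hn : 5 ≤ n) : NonPlanar (⊤ : SimpleGraph (Fin n)) := by
  left
  apply minor_top5_of_clique _ (Fin.castLE hn)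
  · exact Fin.castLE_injective hn
  · intro i j hij
    exact (top_adj _ _).mpr (fun he => hij (Fin.castLE_injective hn he))

/-- For each integer `k ≥ 1` and each integer `β ≥ 3`, there exists a non-planar
connected graph `G` with `dimₖ(G) = β`. -/
theorem stmt8 (k β : ℕ) (hk : 1 ≤ k) (hβ : 3 ≤ β) :
    ∃ (n : ℕ) (G : SimpleGraph (Fin n)), G.Connected ∧ NonPlanar G ∧ dimK G k = β := by
  rcases eq_or_lt_of_le hβ with h3 | h4
  · exact ⟨10, G3, G3_connected, G3_nonplanar, by rw [G3_dimK hk, ← h3]⟩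
  · refine ⟨β + 1, ⊤, top_connected (by omega), top_nonplanar (by omega), ?_⟩
    rw [top_dimK (by omega) hk]
    omega
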